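/- Let M be a Markov chain with absorbing targets T and weight function w : T → [0,∞) such that every state can reach T along edges. Then the reachability Bellman update has a unique fixpoint in ℝ^S, and this fixpoint equals the weighted reachability value vector of M. -/
import Mathlib


/-- A finite Markov chain: transition function `δ` (nonnegative, rows sum to 1)
together with a set `T` of absorbing target states. There is an edge `s → s'`
iff `δ s s' > 0`. -/
structure MC (S : Type) [Fintype S] [DecidableEq S] where
  δ : S → S → ℝ
  T : Finset S
  nonneg : ∀ s s' : S, 0 ≤ δ s s'
  rowsum : ∀ s : S, ∑ s' : S, δ s s' = 1
  absorbing : ∀ t ∈ T, δ t t = 1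

variable {S : Type} [Fintype S] [DecidableEq S]

/-- Edge relation of a Markov chain: `s → s'` iff `δ s s' > 0`. -/
def MC.edge (M : MC S) (a b : S) : Prop := 0 < M.δ a b

/-- `pathLen r n a b`: there is a path of length `n` from `a` to `b` along `r`. -/
def pathLen (r : S → S → Prop) : ℕ → S → S → Prop
  | 0 => fun a b => a = b
  | n + 1 => fun a c => ∃ b, r a b ∧ pathLen r n b c

/-- `reaches r A s`: `s` can reach the set `A` along the relation `r`. -/
def reaches (r : S → S → Prop) (A : Set S) (s : S) : Prop :=
  ∃ n, ∃ a ∈ A, pathLen r n s a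

/-- Length of a shortest path from `s` to the set `A` along `r`. -/
noncomputable def distTo (r : S → S → Prop) (A : Set S) (s : S) : ℕ :=
  sInf {n | ∃ a ∈ A, pathLen r n s a}

/-- Level `0`: the targets together with all states that cannot reach the targets. -/
def MC.level0 (M : MC S) : Set S :=
  {s | s ∈ M.T ∨ ¬ reaches M.edge (M.T : Set S) s}

/-- The levels of a Markov chain: `ℓ_0` is `level0`, and for `i ≥ 1`, `ℓ_i` is the
set of states whose shortest edge-path distance to `ℓ_0` is exactly `i`. -/
noncomputable def MC.levelSet (M : MC S) : ℕ → Set S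
  | 0 => M.level0
  | i + 1 => {s | distTo M.edge M.level0 s = i + 1}

/-- `M` has (exactly) `k` levels: `ℓ_k` is the last nonempty level. -/
def MC.hasLevels (M : MC S) (k : ℕ) : Prop :=
  (M.levelSet k).Nonempty ∧ ∀ i, k < i → M.levelSet i = ∅

/-- One-step transition matrix of the Markov chain. -/
noncomputable def MC.P (M : MC S) : Matrix S S ℝ := Matrix.of M.δ

/-- Weighted reachability value `val(s) = E_s[w(X_{t*}) · 1{t* < ∞}]`, where `t*` is
the first hitting time of `T`. Since `T` is absorbing, this equals the supremum
(monotone limit) over `n` of `∑_{t ∈ T} (δⁿ)(s,t)·w(t)`. -/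
noncomputable def MC.reachVal (M : MC S) (w : S → ℝ) (s : S) : ℝ :=
  ⨆ n : ℕ, ∑ t ∈ M.T, (M.P ^ n) s t * w t

/-- Stochastic shortest path value `val(s) = E_s[∑_{t=0}^{t*} w(X_t)]`, where `t*` is
the first hitting time of `T`: the expected weight collected strictly before `T`
(states outside `T`, counted via the `n`-step distributions) plus the expected weight
of the first target state hit. -/
noncomputable def MC.sspVal (M : MC S) (w : S → ℝ) (s : S) : ℝ :=
  (∑' n : ℕ, ∑ s' ∈ Finset.univ.filter (fun x => x ∉ M.T), (M.P ^ n) s s' * w s')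
    + M.reachVal w s

/-- Smallest positive transition probability of the Markov chain. -/
noncomputable def MC.pmin (M : MC S) : ℝ :=
  sInf {p : ℝ | 0 < p ∧ ∃ s s' : S, M.δ s s' = p}

/-- Reachability Bellman update. -/
noncomputable def MC.reachUpdate (M : MC S) (w : S → ℝ) (v : S → ℝ) : S → ℝ :=
  fun s => if s ∈ M.T then w s else ∑ s' : S, M.δ s s' * v s'

/-- SSP Bellman update. -/
noncomputable def MC.sspUpdate (M : MC S) (w : S → ℝ) (v : S → ℝ) : S → ℝ :=
  fun s => if s ∈ M.T then w s else w s + ∑ s' : S, M.δ s s' * v s'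

/-- The reduced Markov chain `M[s = ·]`: the state `s` is made absorbing (its row of
`δ` replaced by the point mass at `s`) and added to the target set. -/
def MC.reduce (M : MC S) (s : S) : MC S where
  δ := fun a b => if a = s then (if b = s then 1 else 0) else M.δ a b
  T := insert s M.T
  nonneg := by
    intro a b
    by_cases h : a = s
    · by_cases h' : b = s <;> simp [h, h']
    · simpa [h] using M.nonneg a b
  rowsum := by
    intro a
    by_cases h : a = s
    · simp [h]
    · simpa [h] using M.rowsum a
  absorbing := by
    intro t ht
    rcases Finset.mem_insert.mp ht with h | h
    · simp [h]
    · by_cases h' : t = s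
      · simp [h']
      · simpa [h'] using M.absorbing t h

/-- Probability, in `M`, of ever visiting the state `s` when starting from `a`,
i.e. `P_a(∃ t ≥ 0, X_t = s)` (computed as a reachability value after making `s`
absorbing, which does not change the dynamics before the first visit to `s`). -/
noncomputable def MC.hitProb (M : MC S) (a s : S) : ℝ :=
  (M.reduce s).reachVal (fun b => if b = s then 1 else 0) a

/-- Probability of having reached `T` within `i` steps, `P_s(∃ t ≤ i, X_t ∈ T)`;
since `T` is absorbing this equals `∑_{t ∈ T} (δ^i)(s,t)`. -/
noncomputable def MC.hitBy (M : MC S) (s : S) (i : ℕ) : ℝ :=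
  ∑ t ∈ M.T, (M.P ^ i) s t

section Aux

variable {S : Type} [Fintype S] [DecidableEq S]

lemma MC.pow_nonneg (M : MC S) (n : ℕ) (s t : S) : 0 ≤ (M.P ^ n) s t := by
  induction n generalizing s t with
  | zero => simp [Matrix.one_apply]; split <;> norm_num
  | succ n ih =>
    rw [pow_succ', Matrix.mul_apply]
    exact Finset.sum_nonneg fun s' _ => mul_nonneg (M.nonneg s s') (ih s' t)

lemma MC.pow_rowsum (M : MC S) (n : ℕ) (s : S) : ∑ t : S, (M.P ^ n) s t = 1 := by
  induction n generalizing s with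
  | zero => simp [Matrix.one_apply]
  | succ n ih =>
    calc ∑ t : S, (M.P ^ (n+1)) s t
        = ∑ t : S, ∑ s' : S, M.P s s' * (M.P ^ n) s' t := by
          simp [pow_succ', Matrix.mul_apply]
      _ = ∑ s' : S, M.P s s' * ∑ t : S, (M.P ^ n) s' t := by
          rw [Finset.sum_comm]; simp [Finset.mul_sum]
      _ = 1 := by simp only [ih, mul_one]; exact M.rowsum s

lemma MC.delta_absorbing (M : MC S) {t : S} (ht : t ∈ M.T) (b : S) :
    M.δ t b = if b = t then 1 else 0 := by
  by_cases hb : b = t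
  · simp [hb, M.absorbing t ht]
  · simp only [hb, if_false]
    have hsum := M.rowsum t
    have h1 : ∑ b' ∈ ({t} : Finset S), M.δ t b' = 1 := by
      simp [M.absorbing t ht]
    have h2 : ∑ b' ∈ Finset.univ \ {t}, M.δ t b' = 0 := by
      have : ∑ b' ∈ Finset.univ \ {t}, M.δ t b' + ∑ b' ∈ ({t} : Finset S), M.δ t b' = 1 := by
        rw [Finset.sum_sdiff (Finset.subset_univ _)]; exact hsum
      linarith [h1]
    have := (Finset.sum_eq_zero_iff_of_nonneg
      (fun b' _ => M.nonneg t b')).mp h2 b (by simp [hb])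
    exact this

lemma MC.pow_absorbing (M : MC S) {t : S} (ht : t ∈ M.T) (n : ℕ) (b : S) :
    (M.P ^ n) t b = if b = t then 1 else 0 := by
  induction n generalizing b with
  | zero => simp [Matrix.one_apply]; split <;> simp_all [eq_comm]
  | succ n ih =>
    rw [pow_succ, Matrix.mul_apply]
    have : ∀ s' : S, (M.P ^ n) t s' * M.P s' b
        = (if s' = t then 1 else 0) * M.P s' b := fun s' => by rw [ih]
    simp only [this]
    simp only [ite_mul, one_mul, zero_mul]
    rw [Finset.sum_ite_eq' Finset.univ t (fun s' => M.P s' b)]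
    simp [MC.P, M.delta_absorbing ht b]

/-- monotonicity of `(P^n) s t` for `t ∈ T`. -/
lemma MC.pow_mono_T (M : MC S) {t : S} (ht : t ∈ M.T) (n : ℕ) (s : S) :
    (M.P ^ n) s t ≤ (M.P ^ (n+1)) s t := by
  rw [pow_succ, Matrix.mul_apply]
  calc (M.P ^ n) s t = (M.P ^ n) s t * M.P t t := by
        simp [MC.P, M.absorbing t ht]
    _ ≤ ∑ s' : S, (M.P ^ n) s s' * M.P s' t :=
        Finset.single_le_sum (f := fun s' => (M.P ^ n) s s' * M.P s' t)
          (fun s' _ => mul_nonneg (M.pow_nonneg n s s') (M.nonneg s' t))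
          (Finset.mem_univ t)

lemma MC.aMono (M : MC S) (w : S → ℝ) (hw : ∀ t ∈ M.T, 0 ≤ w t) (s : S) :
    Monotone (fun n => ∑ t ∈ M.T, (M.P ^ n) s t * w t) := by
  apply monotone_nat_of_le_succ
  intro n
  apply Finset.sum_le_sum
  intro t ht
  exact mul_le_mul_of_nonneg_right (M.pow_mono_T ht n s) (hw t ht)

lemma MC.aBdd (M : MC S) (w : S → ℝ) (hw : ∀ t ∈ M.T, 0 ≤ w t) (s : S) (n : ℕ) :
    ∑ t ∈ M.T, (M.P ^ n) s t * w t ≤ ∑ t ∈ M.T, w t := by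
  apply Finset.sum_le_sum
  intro t ht
  have h1 : (M.P ^ n) s t ≤ 1 := by
    calc (M.P ^ n) s t ≤ ∑ t' : S, (M.P ^ n) s t' :=
          Finset.single_le_sum (fun t' _ => M.pow_nonneg n s t') (Finset.mem_univ t)
      _ = 1 := M.pow_rowsum n s
  nlinarith [hw t ht, M.pow_nonneg n s t]

lemma MC.tendsto_reachVal (M : MC S) (w : S → ℝ) (hw : ∀ t ∈ M.T, 0 ≤ w t) (s : S) :
    Filter.Tendsto (fun n => ∑ t ∈ M.T, (M.P ^ n) s t * w t)
      Filter.atTop (nhds (M.reachVal w s)) := by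
  exact tendsto_atTop_ciSup (M.aMono w hw s)
    ⟨∑ t ∈ M.T, w t, fun x ⟨n, hn⟩ => hn ▸ M.aBdd w hw s n⟩

lemma MC.reachVal_target (M : MC S) (w : S → ℝ) {t : S} (ht : t ∈ M.T) :
    M.reachVal w t = w t := by
  unfold MC.reachVal
  have : ∀ n : ℕ, ∑ t' ∈ M.T, (M.P ^ n) t t' * w t' = w t := by
    intro n
    have : ∀ t' ∈ M.T, (M.P ^ n) t t' * w t' = (if t' = t then w t else 0) := by
      intro t' _
      rw [M.pow_absorbing ht n t']
      split <;> simp_all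
    rw [Finset.sum_congr rfl this, Finset.sum_ite_eq' M.T t (fun _ => w t), if_pos ht]
  simp only [this]
  exact ciSup_const

lemma MC.recurrence (M : MC S) (w : S → ℝ) (s : S) (n : ℕ) :
    ∑ t ∈ M.T, (M.P ^ (n+1)) s t * w t
      = ∑ s' : S, M.δ s s' * ∑ t ∈ M.T, (M.P ^ n) s' t * w t := by
  have : ∀ t : S, (M.P ^ (n+1)) s t = ∑ s' : S, M.δ s s' * (M.P ^ n) s' t := by
    intro t; rw [pow_succ', Matrix.mul_apply]; rfl
  simp only [this, Finset.sum_mul, Finset.mul_sum]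
  rw [Finset.sum_comm]
  congr 1; ext s'; congr 1; ext t; ring

lemma MC.reachVal_fixpoint (M : MC S) (w : S → ℝ) (hw : ∀ t ∈ M.T, 0 ≤ w t) :
    M.reachUpdate w (M.reachVal w) = M.reachVal w := by
  funext s
  unfold MC.reachUpdate
  by_cases hs : s ∈ M.T
  · rw [if_pos hs, M.reachVal_target w hs]
  · rw [if_neg hs]
    have h1 : Filter.Tendsto (fun n => ∑ t ∈ M.T, (M.P ^ (n+1)) s t * w t)
        Filter.atTop (nhds (M.reachVal w s)) :=
      (M.tendsto_reachVal w hw s).comp (Filter.tendsto_add_atTop_nat 1)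
    have h2 : Filter.Tendsto (fun n => ∑ s' : S, M.δ s s' * ∑ t ∈ M.T, (M.P ^ n) s' t * w t)
        Filter.atTop (nhds (∑ s' : S, M.δ s s' * M.reachVal w s')) := by
      apply tendsto_finset_sum
      intro s' _
      exact (M.tendsto_reachVal w hw s').const_mul _
    have h3 : (fun n => ∑ t ∈ M.T, (M.P ^ (n+1)) s t * w t)
        = fun n => ∑ s' : S, M.δ s s' * ∑ t ∈ M.T, (M.P ^ n) s' t * w t := by
      funext n; exact M.recurrence w s n
    rw [h3] at h1
    exact (tendsto_nhds_unique h1 h2).symm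

lemma MC.homog_zero (M : MC S) [Nonempty S]
    (hreach : ∀ a : S, reaches M.edge (M.T : Set S) a)
    (d : S → ℝ) (hT : ∀ t ∈ M.T, d t = 0)
    (hfix : ∀ s ∉ M.T, d s = ∑ s' : S, M.δ s s' * d s') :
    ∀ s, d s = 0 := by
  obtain ⟨s0, -, hs0⟩ := Finset.exists_max_image Finset.univ (fun s => |d s|)
    Finset.univ_nonempty
  set m := |d s0| with hm
  have hmax : ∀ s : S, |d s| ≤ m := fun s => hs0 s (Finset.mem_univ s)
  -- key step: if |d s| = m, s ∉ T, edge s b, then |d b| = m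
  have key : ∀ s b : S, |d s| = m → s ∉ M.T → M.edge s b → |d b| = m := by
    intro s b hds hsT hedge
    have heq : d s = ∑ s' : S, M.δ s s' * d s' := hfix s hsT
    have hle : m ≤ ∑ s' : S, M.δ s s' * |d s'| := by
      calc m = |d s| := hds.symm
        _ = |∑ s' : S, M.δ s s' * d s'| := by rw [heq]
        _ ≤ ∑ s' : S, |M.δ s s' * d s'| := Finset.abs_sum_le_sum_abs _ _
        _ = ∑ s' : S, M.δ s s' * |d s'| := by
            congr 1; ext s'; rw [abs_mul, abs_of_nonneg (M.nonneg s s')]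
    have hge : ∑ s' : S, M.δ s s' * |d s'| ≤ m := by
      calc ∑ s' : S, M.δ s s' * |d s'| ≤ ∑ s' : S, M.δ s s' * m :=
            Finset.sum_le_sum fun s' _ =>
              mul_le_mul_of_nonneg_left (hmax s') (M.nonneg s s')
        _ = m := by rw [← Finset.sum_mul, M.rowsum s, one_mul]
    have hZero : ∑ s' : S, M.δ s s' * (m - |d s'|) = 0 := by
      simp only [mul_sub]
      rw [Finset.sum_sub_distrib, ← Finset.sum_mul, M.rowsum s, one_mul]
      linarith
    have := (Finset.sum_eq_zero_iff_of_nonneg (fun s' _ =>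
      mul_nonneg (M.nonneg s s') (by linarith [hmax s']))).mp hZero b (Finset.mem_univ b)
    have hδ : 0 < M.δ s b := hedge
    have : m - |d b| = 0 := by
      rcases mul_eq_zero.mp this with h | h
      · exact absurd h (ne_of_gt hδ)
      · exact h
    linarith
  -- induction along a path to T
  have path0 : ∀ n : ℕ, ∀ s a : S, a ∈ M.T → pathLen M.edge n s a → |d s| = m → m = 0 := by
    intro n
    induction n with
    | zero =>
      intro s a ha hp hds
      unfold pathLen at hp
      subst hp
      rw [← hds, hT s ha, abs_zero]
    | succ n ih =>
      intro s a ha hp hds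
      obtain ⟨b, hedge, hp'⟩ := hp
      by_cases hsT : s ∈ M.T
      · rw [← hds, hT s hsT, abs_zero]
      · exact ih b a ha hp' (key s b hds hsT hedge)
  obtain ⟨n, a, ha, hp⟩ := hreach s0
  have hm0 : m = 0 := path0 n s0 a ha hp rfl
  intro s
  have := hmax s
  rw [hm0] at this
  exact abs_nonpos_iff.mp this

end Aux

/-- If every state can reach `T`, then the reachability Bellman
update has a unique fixpoint, and it equals the weighted reachability value vector. -/
theorem stmt_17 {S : Type} [Fintype S] [DecidableEq S] [Nonempty S]
    (M : MC S) (hreach : ∀ a : S, reaches M.edge (M.T : Set S) a)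
    (w : S → ℝ) (hw : ∀ t ∈ M.T, 0 ≤ w t) :
    ∀ v : S → ℝ, M.reachUpdate w v = v ↔ v = M.reachVal w := by
  intro v
  constructor
  · intro h
    set d : S → ℝ := fun s => v s - M.reachVal w s with hd
    have hT : ∀ t ∈ M.T, d t = 0 := by
      intro t ht
      have h1 : v t = w t := by
        have := congrFun h t
        simpa [MC.reachUpdate, ht] using this.symm
      simp [hd, h1, M.reachVal_target w ht]
    have hfix : ∀ s ∉ M.T, d s = ∑ s' : S, M.δ s s' * d s' := by
      intro s hs
      have h1 : v s = ∑ s' : S, M.δ s s' * v s' := by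
        have := congrFun h s
        simpa [MC.reachUpdate, hs] using this.symm
      have h2 : M.reachVal w s = ∑ s' : S, M.δ s s' * M.reachVal w s' := by
        have := congrFun (M.reachVal_fixpoint w hw) s
        simpa [MC.reachUpdate, hs] using this.symm
      simp only [hd, h1, h2, mul_sub, Finset.sum_sub_distrib]
    have := M.homog_zero hreach d hT hfix
    funext s
    have := this s
    simp only [hd] at this
    linarith
  · intro h
    rw [h]
    exact M.reachVal_fixpoint w hw
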